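/- Let D be a noncommutative division ring. Then D is infinite. -/
import Mathlib


/-- A noncommutative division ring is infinite. -/
theorem stmt_1 (D : Type*) [DivisionRing D]
    (hnc : ∃ a b : D, a * b ≠ b * a) : Infinite D := by
  obtain ⟨a, b, h⟩ := hnc
  rw [not_finite_iff_infinite.symm]
  intro hf
  exact h (mul_comm a b)
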